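/- Let n ≥ 3, let θ : Fin n → ℝ and p : Fin n × Fin n → [0,1], and consider the Bernoulli-Plackett-Luce model with edge indicators a_{ij}. Fix an index j, a vector x ∈ ℝⁿ, real weights w_{ij} for i ≠ j, a bias b_j ∈ ℝ, and a scale σ_j > 0. Then the expectation over the Bernoulli-Plackett-Luce model of the Gaussian log-density log N(x_j | μ_j, σ_j²), where μ_j = b_j + Σ_{i ≠ j} a_{ij} w_{ij} x_i and log N(y|μ,σ²) = −½(log(2πσ²) + (y−μ)²/σ²), equals −½ · [ log(2πσ_j²) + (1/σ_j²) · ( (x_j − b_j − Σ_{i ≠ j} E[a_{ij}] w_{ij} x_i)² + Σ_{i ≠ j} E[a_{ij}](1 − E[a_{ij}]) w_{ij}² x_i² + Σ_{i ≠ j} Σ_{k ≠ j, k ≠ i} (E[a_{ij}] w_{ij} x_i)(E[a_{kj}] w_{kj} x_k) · exp(θ_j)/(exp(θ_i)+exp(θ_j)+exp(θ_k)) ) ], where E[a_{ij}] = p_{ij} · exp(θ_i)/(exp(θ_i)+exp(θ_j)). -/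

import Mathlib

open Finset

/-- The Plackett-Luce probability of a permutation `π` of `{1,…,n}` with logits `θ`. -/
noncomputable def plackettLuce {n : ℕ} (θ : Fin n → ℝ) (π : Equiv.Perm (Fin n)) : ℝ :=
  ∏ k : Fin n,
    Real.exp (θ (π k)) / ∑ u ∈ Finset.univ.filter (fun u => k ≤ u), Real.exp (θ (π u))

/-- Joint probability of a `(permutation, edge mask)` sample under the
Bernoulli-Plackett-Luce model. -/
noncomputable def bplProb {n : ℕ} (θ : Fin n → ℝ) (p : Fin n → Fin n → ℝ)
    (ω : Equiv.Perm (Fin n) × (Fin n → Fin n → Bool)) : ℝ :=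
  plackettLuce θ ω.1 * ∏ i : Fin n, ∏ j : Fin n, (if ω.2 i j then p i j else 1 - p i j)

/-- The edge indicator `a_{ij} = b_{ij} · 1[π⁻¹(i) < π⁻¹(j)]`. -/
def bplEdge {n : ℕ} (i j : Fin n)
    (ω : Equiv.Perm (Fin n) × (Fin n → Fin n → Bool)) : ℝ :=
  if ω.2 i j ∧ ω.1.symm i < ω.1.symm j then 1 else 0

/-- The expected edge probability `E[a_{ij}] = p_{ij} · e^{θ_i}/(e^{θ_i}+e^{θ_j})`. -/
noncomputable def bplEdgeExp {n : ℕ} (θ : Fin n → ℝ) (p : Fin n → Fin n → ℝ)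
    (i j : Fin n) : ℝ :=
  p i j * (Real.exp (θ i) / (Real.exp (θ i) + Real.exp (θ j)))

section BPLAux

lemma pl_rec {m : ℕ} (θ : Fin (m + 1) → ℝ) (q : Fin (m + 1)) (e : Equiv.Perm (Fin m)) :
    plackettLuce θ (Equiv.Perm.decomposeFin.symm (q, e)) =
      Real.exp (θ q) / (∑ u, Real.exp (θ u)) *
        plackettLuce (fun i => θ (Equiv.swap 0 q i.succ)) e := by
  set π := Equiv.Perm.decomposeFin.symm (q, e) with hπ
  unfold plackettLuce
  rw [Fin.prod_univ_succ]
  congr 1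
  · have h1 : Finset.univ.filter (fun u : Fin (m+1) => (0:Fin (m+1)) ≤ u) = Finset.univ := by
      apply Finset.filter_true_of_mem; intro u _; exact Fin.zero_le u
    rw [h1, Equiv.Perm.decomposeFin_symm_apply_zero]
    congr 1
    exact Equiv.sum_comp π (fun u => Real.exp (θ u))
  · apply Finset.prod_congr rfl
    intro k _
    congr 1
    · congr 1
      rw [Equiv.Perm.decomposeFin_symm_apply_succ]
    · refine Finset.sum_bij' (fun (u : Fin (m+1)) (hu : u ∈ Finset.univ.filter (fun u => k.succ ≤ u)) =>
        u.pred (by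
          have h2 := (Finset.mem_filter.mp hu).2
          intro h0; rw [h0] at h2
          exact absurd h2 (by simp [Fin.le_def])))
        (fun (v : Fin m) (hv : v ∈ Finset.univ.filter (fun v => k ≤ v)) => v.succ)
        ?_ ?_ ?_ ?_ ?_
      · intro u hu
        simp only [Finset.mem_filter, Finset.mem_univ, true_and] at hu ⊢
        exact (Fin.le_pred_iff _).mpr hu
      · intro v hv
        simp only [Finset.mem_filter, Finset.mem_univ, true_and] at hv ⊢
        exact Fin.succ_le_succ_iff.mpr hv
      · intro u hu; simp
      · intro v hv; simp
      · intro u hu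
        have hne : u ≠ 0 := by
          intro h0
          have h2 := (Finset.mem_filter.mp hu).2
          rw [h0] at h2
          exact absurd h2 (by simp [Fin.le_def])
        have h3 : (u.pred hne).succ = u := Fin.succ_pred u hne
        calc Real.exp (θ (π u)) = Real.exp (θ (π (u.pred hne).succ)) := by rw [h3]
        _ = _ := by rw [Equiv.Perm.decomposeFin_symm_apply_succ]


lemma exp_sum_pos {m : ℕ} (θ : Fin (m + 1) → ℝ) : 0 < ∑ u, Real.exp (θ u) :=
  Finset.sum_pos (fun u _ => Real.exp_pos _) ⟨0, Finset.mem_univ 0⟩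

lemma swap_zero_ne {m : ℕ} {q i : Fin (m + 1)} (hiq : i ≠ q) : Equiv.swap 0 q i ≠ 0 := by
  intro h
  apply hiq
  have := congrArg (Equiv.swap 0 q) h
  simpa using this

lemma decomp_symm_q {m : ℕ} (q : Fin (m + 1)) (e : Equiv.Perm (Fin m)) :
    (Equiv.Perm.decomposeFin.symm (q, e)).symm q = 0 := by
  rw [Equiv.symm_apply_eq, Equiv.Perm.decomposeFin_symm_apply_zero]

lemma decomp_symm_pos {m : ℕ} {q i : Fin (m + 1)} (hiq : i ≠ q) (e : Equiv.Perm (Fin m)) :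
    (Equiv.Perm.decomposeFin.symm (q, e)).symm i
      = (e.symm ((Equiv.swap 0 q i).pred (swap_zero_ne hiq))).succ := by
  rw [Equiv.symm_apply_eq, Equiv.Perm.decomposeFin_symm_apply_succ]
  simp [Fin.succ_pred]

lemma pl_sum : ∀ (m : ℕ) (θ : Fin m → ℝ),
    ∑ π : Equiv.Perm (Fin m), plackettLuce θ π = 1 := by
  intro m
  induction m with
  | zero =>
    intro θ
    simp [plackettLuce, Finset.card_univ]
  | succ m ih =>
    intro θ
    rw [← Equiv.sum_comp Equiv.Perm.decomposeFin.symm (fun π => plackettLuce θ π),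
      Fintype.sum_prod_type]
    have hT := exp_sum_pos θ
    calc ∑ q, ∑ e : Equiv.Perm (Fin m), plackettLuce θ (Equiv.Perm.decomposeFin.symm (q, e))
        = ∑ q : Fin (m+1), Real.exp (θ q) / (∑ u, Real.exp (θ u)) := by
          apply Finset.sum_congr rfl
          intro q _
          simp only [pl_rec]
          rw [← Finset.mul_sum, ih, mul_one]
      _ = 1 := by rw [← Finset.sum_div, div_self (ne_of_gt hT)]


-- θ' value lemma
lemma theta'_eval {m : ℕ} (θ : Fin (m + 1) → ℝ) {q i : Fin (m + 1)} (hiq : i ≠ q) :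
    θ (Equiv.swap 0 q ((Equiv.swap 0 q i).pred (swap_zero_ne hiq)).succ) = θ i := by
  rw [Fin.succ_pred, Equiv.swap_apply_self]

lemma pl_marg1 : ∀ (m : ℕ) (θ : Fin m → ℝ) (i j : Fin m), i ≠ j →
    ∑ π : Equiv.Perm (Fin m),
      plackettLuce θ π * (if π.symm i < π.symm j then (1:ℝ) else 0)
      = Real.exp (θ i) / (Real.exp (θ i) + Real.exp (θ j)) := by
  intro m
  induction m with
  | zero => intro θ i; exact i.elim0
  | succ m ih =>
    intro θ i j hij
    have hT := exp_sum_pos θ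
    set T := ∑ u, Real.exp (θ u) with hTdef
    set A := Real.exp (θ i) with hA
    set B := Real.exp (θ j) with hB
    have hAB : 0 < A + B := by positivity
    rw [← Equiv.sum_comp Equiv.Perm.decomposeFin.symm
      (fun π => plackettLuce θ π * (if π.symm i < π.symm j then (1:ℝ) else 0)),
      Fintype.sum_prod_type]
    have key : ∀ q : Fin (m+1),
        (∑ e : Equiv.Perm (Fin m),
          plackettLuce θ (Equiv.Perm.decomposeFin.symm (q, e)) *
            (if (Equiv.Perm.decomposeFin.symm (q, e)).symm i
                < (Equiv.Perm.decomposeFin.symm (q, e)).symm j then (1:ℝ) else 0))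
        = Real.exp (θ q) / T * (if q = i then 1 else if q = j then 0 else A / (A + B)) := by
      intro q
      by_cases hqi : q = i
      · subst hqi
        rw [if_pos rfl]
        have step : ∀ e : Equiv.Perm (Fin m),
            plackettLuce θ (Equiv.Perm.decomposeFin.symm (q, e)) *
              (if (Equiv.Perm.decomposeFin.symm (q, e)).symm q
                  < (Equiv.Perm.decomposeFin.symm (q, e)).symm j then (1:ℝ) else 0)
            = Real.exp (θ q) / T * plackettLuce (fun i => θ (Equiv.swap 0 q i.succ)) e := by
          intro e
          rw [pl_rec, decomp_symm_q, decomp_symm_pos (Ne.symm hij) e, if_pos (Fin.succ_pos _),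
            mul_one]
        rw [Finset.sum_congr rfl (fun e _ => step e), ← Finset.mul_sum, pl_sum, mul_one]
      · by_cases hqj : q = j
        · subst hqj
          rw [if_neg hqi, if_pos rfl, mul_zero]
          apply Finset.sum_eq_zero
          intro e _
          rw [decomp_symm_q, if_neg (Fin.not_lt_zero _), mul_zero]
        · rw [if_neg hqi, if_neg hqj]
          have hiq : i ≠ q := fun h => hqi h.symm
          have hjq : j ≠ q := fun h => hqj h.symm
          set i' := (Equiv.swap 0 q i).pred (swap_zero_ne hiq) with hi'
          set j' := (Equiv.swap 0 q j).pred (swap_zero_ne hjq) with hj'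
          have hij' : i' ≠ j' := by
            intro h
            apply hij
            have := congrArg Fin.succ h
            rw [Fin.succ_pred, Fin.succ_pred] at this
            exact (Equiv.swap 0 q).injective this
          have step : ∀ e : Equiv.Perm (Fin m),
              plackettLuce θ (Equiv.Perm.decomposeFin.symm (q, e)) *
                (if (Equiv.Perm.decomposeFin.symm (q, e)).symm i
                    < (Equiv.Perm.decomposeFin.symm (q, e)).symm j then (1:ℝ) else 0)
              = Real.exp (θ q) / T *
                  (plackettLuce (fun i => θ (Equiv.swap 0 q i.succ)) e *
                    (if e.symm i' < e.symm j' then (1:ℝ) else 0)) := by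
            intro e
            rw [pl_rec, decomp_symm_pos hiq e, decomp_symm_pos hjq e, mul_assoc]
            congr 2
            simp [Fin.succ_lt_succ_iff]
            rfl
          rw [Finset.sum_congr rfl (fun e _ => step e), ← Finset.mul_sum,
            ih _ i' j' hij']
          have e1 : θ (Equiv.swap 0 q i'.succ) = θ i := by
            rw [hi', Fin.succ_pred, Equiv.swap_apply_self]
          have e2 : θ (Equiv.swap 0 q j'.succ) = θ j := by
            rw [hj', Fin.succ_pred, Equiv.swap_apply_self]
          simp only [e1, e2, hA, hB]
    rw [Finset.sum_congr rfl (fun q _ => key q)]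
    have expand : ∀ q : Fin (m+1),
        Real.exp (θ q) / T * (if q = i then 1 else if q = j then 0 else A / (A + B))
        = Real.exp (θ q) / T * (A / (A + B))
          + ((if q = i then A / T * (1 - A / (A + B)) else 0)
          + (if q = j then -(B / T * (A / (A + B))) else 0)) := by
      intro q
      by_cases hqi : q = i
      · subst hqi
        rw [if_pos rfl, if_pos rfl, if_neg hij, hA]
        ring
      · by_cases hqj : q = j
        · subst hqj
          rw [if_neg hqi, if_pos rfl, if_neg hqi, if_pos rfl, hB]
          ring
        · simp [hqi, hqj]
    rw [Finset.sum_congr rfl (fun q _ => expand q), Finset.sum_add_distrib,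
      Finset.sum_add_distrib, Finset.sum_ite_eq' Finset.univ i, Finset.sum_ite_eq' Finset.univ j,
      if_pos (Finset.mem_univ i), if_pos (Finset.mem_univ j)]
    have h1 : ∑ q : Fin (m+1), Real.exp (θ q) / T * (A / (A + B)) = A / (A + B) := by
      rw [← Finset.sum_mul, ← Finset.sum_div, ← hTdef, div_self (ne_of_gt hT), one_mul]
    rw [h1]
    field_simp
    ring


lemma pl_marg2 : ∀ (m : ℕ) (θ : Fin m → ℝ) (i k j : Fin m), i ≠ j → k ≠ j → i ≠ k →
    ∑ π : Equiv.Perm (Fin m),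
      plackettLuce θ π * (if π.symm i < π.symm j then (1:ℝ) else 0)
        * (if π.symm k < π.symm j then (1:ℝ) else 0)
      = Real.exp (θ i) * Real.exp (θ k)
          * (Real.exp (θ i) + Real.exp (θ k) + 2 * Real.exp (θ j))
        / ((Real.exp (θ i) + Real.exp (θ k) + Real.exp (θ j))
            * (Real.exp (θ i) + Real.exp (θ j)) * (Real.exp (θ k) + Real.exp (θ j))) := by
  intro m
  induction m with
  | zero => intro θ i; exact i.elim0
  | succ m ihm =>
    intro θ i k j hij hkj hik
    have hT := exp_sum_pos θ
    set T := ∑ u, Real.exp (θ u) with hTdef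
    set A := Real.exp (θ i) with hA
    set B := Real.exp (θ k) with hB
    set C := Real.exp (θ j) with hC
    have hApos : 0 < A := Real.exp_pos _
    have hBpos : 0 < B := Real.exp_pos _
    have hCpos : 0 < C := Real.exp_pos _
    set F := A * B * (A + B + 2 * C) / ((A + B + C) * (A + C) * (B + C)) with hF
    rw [← Equiv.sum_comp Equiv.Perm.decomposeFin.symm
      (fun π => plackettLuce θ π * (if π.symm i < π.symm j then (1:ℝ) else 0)
        * (if π.symm k < π.symm j then (1:ℝ) else 0)),
      Fintype.sum_prod_type]
    have key : ∀ q : Fin (m+1),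
        (∑ e : Equiv.Perm (Fin m),
          plackettLuce θ (Equiv.Perm.decomposeFin.symm (q, e)) *
            (if (Equiv.Perm.decomposeFin.symm (q, e)).symm i
                < (Equiv.Perm.decomposeFin.symm (q, e)).symm j then (1:ℝ) else 0) *
            (if (Equiv.Perm.decomposeFin.symm (q, e)).symm k
                < (Equiv.Perm.decomposeFin.symm (q, e)).symm j then (1:ℝ) else 0))
        = Real.exp (θ q) / T *
            (if q = i then B / (B + C) else if q = k then A / (A + C)
              else if q = j then 0 else F) := by
      intro q
      by_cases hqi : q = i
      · subst hqi
        rw [if_pos rfl]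
        have hjq : j ≠ q := Ne.symm hij
        have hkq : k ≠ q := fun h => hik (h.symm)
        set k' := (Equiv.swap 0 q k).pred (swap_zero_ne hkq) with hk'
        set j' := (Equiv.swap 0 q j).pred (swap_zero_ne hjq) with hj'
        have hkj' : k' ≠ j' := by
          intro h
          apply hkj
          have := congrArg Fin.succ h
          rw [Fin.succ_pred, Fin.succ_pred] at this
          exact (Equiv.swap 0 q).injective this
        have step : ∀ e : Equiv.Perm (Fin m),
            plackettLuce θ (Equiv.Perm.decomposeFin.symm (q, e)) *
              (if (Equiv.Perm.decomposeFin.symm (q, e)).symm q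
                  < (Equiv.Perm.decomposeFin.symm (q, e)).symm j then (1:ℝ) else 0) *
              (if (Equiv.Perm.decomposeFin.symm (q, e)).symm k
                  < (Equiv.Perm.decomposeFin.symm (q, e)).symm j then (1:ℝ) else 0)
            = Real.exp (θ q) / T *
                (plackettLuce (fun i => θ (Equiv.swap 0 q i.succ)) e *
                  (if e.symm k' < e.symm j' then (1:ℝ) else 0)) := by
          intro e
          rw [pl_rec, decomp_symm_q, decomp_symm_pos hkq e, decomp_symm_pos hjq e,
            if_pos (Fin.succ_pos _), mul_one]
          simp only [Fin.succ_lt_succ_iff, mul_assoc]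
          rfl
        rw [Finset.sum_congr rfl (fun e _ => step e), ← Finset.mul_sum,
          pl_marg1 _ _ k' j' hkj']
        have e1 : θ (Equiv.swap 0 q k'.succ) = θ k := by
          rw [hk', Fin.succ_pred, Equiv.swap_apply_self]
        have e2 : θ (Equiv.swap 0 q j'.succ) = θ j := by
          rw [hj', Fin.succ_pred, Equiv.swap_apply_self]
        simp only [e1, e2, hB, hC]
      · by_cases hqk : q = k
        · subst hqk
          rw [if_neg hqi, if_pos rfl]
          have hjq : j ≠ q := Ne.symm hkj
          have hiq : i ≠ q := hik
          set i' := (Equiv.swap 0 q i).pred (swap_zero_ne hiq) with hi'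
          set j' := (Equiv.swap 0 q j).pred (swap_zero_ne hjq) with hj'
          have hij' : i' ≠ j' := by
            intro h
            apply hij
            have := congrArg Fin.succ h
            rw [Fin.succ_pred, Fin.succ_pred] at this
            exact (Equiv.swap 0 q).injective this
          have step : ∀ e : Equiv.Perm (Fin m),
              plackettLuce θ (Equiv.Perm.decomposeFin.symm (q, e)) *
                (if (Equiv.Perm.decomposeFin.symm (q, e)).symm i
                    < (Equiv.Perm.decomposeFin.symm (q, e)).symm j then (1:ℝ) else 0) *
                (if (Equiv.Perm.decomposeFin.symm (q, e)).symm q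
                    < (Equiv.Perm.decomposeFin.symm (q, e)).symm j then (1:ℝ) else 0)
              = Real.exp (θ q) / T *
                  (plackettLuce (fun i => θ (Equiv.swap 0 q i.succ)) e *
                    (if e.symm i' < e.symm j' then (1:ℝ) else 0)) := by
            intro e
            rw [pl_rec, decomp_symm_q, decomp_symm_pos hiq e, decomp_symm_pos hjq e,
              if_pos (Fin.succ_pos _), mul_one]
            simp only [Fin.succ_lt_succ_iff, mul_assoc]
            rfl
          rw [Finset.sum_congr rfl (fun e _ => step e), ← Finset.mul_sum,
            pl_marg1 _ _ i' j' hij']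
          have e1 : θ (Equiv.swap 0 q i'.succ) = θ i := by
            rw [hi', Fin.succ_pred, Equiv.swap_apply_self]
          have e2 : θ (Equiv.swap 0 q j'.succ) = θ j := by
            rw [hj', Fin.succ_pred, Equiv.swap_apply_self]
          simp only [e1, e2, hA, hC]
        · by_cases hqj : q = j
          · subst hqj
            rw [if_neg hqi, if_neg hqk, if_pos rfl, mul_zero]
            apply Finset.sum_eq_zero
            intro e _
            rw [decomp_symm_q, if_neg (Fin.not_lt_zero _), mul_zero, zero_mul]
          · rw [if_neg hqi, if_neg hqk, if_neg hqj]
            have hiq : i ≠ q := fun h => hqi h.symm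
            have hkq : k ≠ q := fun h => hqk h.symm
            have hjq : j ≠ q := fun h => hqj h.symm
            set i' := (Equiv.swap 0 q i).pred (swap_zero_ne hiq) with hi'
            set k' := (Equiv.swap 0 q k).pred (swap_zero_ne hkq) with hk'
            set j' := (Equiv.swap 0 q j).pred (swap_zero_ne hjq) with hj'
            have inj : ∀ (a b : Fin (m+1)) (ha : a ≠ q) (hb : b ≠ q), a ≠ b →
                (Equiv.swap 0 q a).pred (swap_zero_ne ha)
                  ≠ (Equiv.swap 0 q b).pred (swap_zero_ne hb) := by
              intro a b ha hb hab h
              apply hab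
              have := congrArg Fin.succ h
              rw [Fin.succ_pred, Fin.succ_pred] at this
              exact (Equiv.swap 0 q).injective this
            have hij' : i' ≠ j' := inj i j hiq hjq hij
            have hkj' : k' ≠ j' := inj k j hkq hjq hkj
            have hik' : i' ≠ k' := inj i k hiq hkq hik
            have step : ∀ e : Equiv.Perm (Fin m),
                plackettLuce θ (Equiv.Perm.decomposeFin.symm (q, e)) *
                  (if (Equiv.Perm.decomposeFin.symm (q, e)).symm i
                      < (Equiv.Perm.decomposeFin.symm (q, e)).symm j then (1:ℝ) else 0) *
                  (if (Equiv.Perm.decomposeFin.symm (q, e)).symm k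
                      < (Equiv.Perm.decomposeFin.symm (q, e)).symm j then (1:ℝ) else 0)
                = Real.exp (θ q) / T *
                    (plackettLuce (fun i => θ (Equiv.swap 0 q i.succ)) e *
                      (if e.symm i' < e.symm j' then (1:ℝ) else 0) *
                      (if e.symm k' < e.symm j' then (1:ℝ) else 0)) := by
              intro e
              rw [pl_rec, decomp_symm_pos hiq e, decomp_symm_pos hkq e, decomp_symm_pos hjq e]
              simp only [Fin.succ_lt_succ_iff, mul_assoc]
              rfl
            rw [Finset.sum_congr rfl (fun e _ => step e), ← Finset.mul_sum,
              ihm _ i' k' j' hij' hkj' hik']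
            have e1 : θ (Equiv.swap 0 q i'.succ) = θ i := by
              rw [hi', Fin.succ_pred, Equiv.swap_apply_self]
            have e2 : θ (Equiv.swap 0 q k'.succ) = θ k := by
              rw [hk', Fin.succ_pred, Equiv.swap_apply_self]
            have e3 : θ (Equiv.swap 0 q j'.succ) = θ j := by
              rw [hj', Fin.succ_pred, Equiv.swap_apply_self]
            simp only [e1, e2, e3, hA, hB, hC, hF]
    rw [Finset.sum_congr rfl (fun q _ => key q)]
    have expand : ∀ q : Fin (m+1),
        Real.exp (θ q) / T *
            (if q = i then B / (B + C) else if q = k then A / (A + C)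
              else if q = j then 0 else F)
        = Real.exp (θ q) / T * F
          + ((if q = i then A / T * (B / (B + C) - F) else 0)
          + ((if q = k then B / T * (A / (A + C) - F) else 0)
          + (if q = j then C / T * (0 - F) else 0))) := by
      intro q
      by_cases hqi : q = i
      · subst hqi
        rw [if_pos rfl, if_pos rfl, if_neg hik, if_neg hij, hA]
        ring
      · by_cases hqk : q = k
        · subst hqk
          rw [if_neg hqi, if_pos rfl, if_neg hqi, if_pos rfl, if_neg hkj, hB]
          ring
        · by_cases hqj : q = j
          · subst hqj
            rw [if_neg hqi, if_neg hqk, if_pos rfl, if_neg hqi, if_neg hqk, if_pos rfl, hC]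
            ring
          · simp [hqi, hqk, hqj]
    rw [Finset.sum_congr rfl (fun q _ => expand q), Finset.sum_add_distrib,
      Finset.sum_add_distrib, Finset.sum_add_distrib,
      Finset.sum_ite_eq' Finset.univ i, Finset.sum_ite_eq' Finset.univ k,
      Finset.sum_ite_eq' Finset.univ j,
      if_pos (Finset.mem_univ i), if_pos (Finset.mem_univ k), if_pos (Finset.mem_univ j)]
    have h1 : ∑ q : Fin (m+1), Real.exp (θ q) / T * F = F := by
      rw [← Finset.sum_mul, ← Finset.sum_div, ← hTdef, div_self (ne_of_gt hT), one_mul]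
    rw [h1, hF]
    field_simp
    ring


lemma sum_mask_fun {α β : Type*} [Fintype α] [DecidableEq α] [Fintype β]
    (f : α → β → ℝ) :
    ∑ m : α → β, ∏ a, f a (m a) = ∏ a, ∑ b, f a b := (Fintype.prod_sum f).symm

lemma sum_mask_curried {n : ℕ} (f : Fin n → Fin n → Bool → ℝ) :
    ∑ m : Fin n → Fin n → Bool, ∏ i, ∏ j, f i j (m i j)
      = ∏ i, ∏ j, (f i j false + f i j true) := by
  rw [sum_mask_fun (fun i (row : Fin n → Bool) => ∏ j, f i j (row j))]
  apply Finset.prod_congr rfl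
  intro i _
  rw [sum_mask_fun (fun j b => f i j b)]
  apply Finset.prod_congr rfl
  intro j _
  rw [Fintype.sum_bool, add_comm]

-- extract a single special entry
lemma prod_special_one {n : ℕ} (i0 j0 : Fin n) (g : Fin n → Fin n → ℝ) :
    (∏ i, ∏ j, if i = i0 ∧ j = j0 then g i j else 1) = g i0 j0 := by
  have row : ∀ i : Fin n, (∏ j, if i = i0 ∧ j = j0 then g i j else 1)
      = if i = i0 then g i j0 else 1 := by
    intro i
    by_cases h : i = i0
    · subst h
      simp only [true_and, if_pos rfl]
      exact Finset.prod_ite_eq' Finset.univ j0 (g i) |>.trans (if_pos (Finset.mem_univ _))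
    · simp [h]
  rw [Finset.prod_congr rfl (fun i _ => row i)]
  exact Finset.prod_ite_eq' Finset.univ i0 (fun i => g i j0) |>.trans (if_pos (Finset.mem_univ _))

lemma prod_special_two {n : ℕ} (i0 k0 j0 : Fin n) (hik : i0 ≠ k0) (g : Fin n → Fin n → ℝ) :
    (∏ i, ∏ j, if (i = i0 ∧ j = j0) ∨ (i = k0 ∧ j = j0) then g i j else 1)
      = g i0 j0 * g k0 j0 := by
  have row : ∀ i : Fin n, (∏ j, if (i = i0 ∧ j = j0) ∨ (i = k0 ∧ j = j0) then g i j else 1)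
      = if i = i0 then g i j0 else if i = k0 then g i j0 else 1 := by
    intro i
    by_cases h : i = i0
    · subst h
      simp only [if_pos rfl, true_and]
      have : ∀ j, (if j = j0 ∨ (i = k0 ∧ j = j0) then g i j else 1)
          = if j = j0 then g i j else 1 := by
        intro j
        by_cases hj : j = j0 <;> simp [hj, hik]
      rw [Finset.prod_congr rfl (fun j _ => this j)]
      exact Finset.prod_ite_eq' Finset.univ j0 (g i) |>.trans (if_pos (Finset.mem_univ _))
    · by_cases h2 : i = k0
      · subst h2
        simp only [if_neg h, if_pos rfl, true_and]
        have : ∀ j, (if (i = i0 ∧ j = j0) ∨ j = j0 then g i j else 1)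
            = if j = j0 then g i j else 1 := by
          intro j
          by_cases hj : j = j0 <;> simp [hj, h]
        rw [Finset.prod_congr rfl (fun j _ => this j)]
        exact Finset.prod_ite_eq' Finset.univ j0 (g i) |>.trans (if_pos (Finset.mem_univ _))
      · simp [h, h2]
  rw [Finset.prod_congr rfl (fun i _ => row i)]
  have : ∀ i : Fin n, (if i = i0 then g i j0 else if i = k0 then g i j0 else 1)
      = (if i = i0 then g i j0 else 1) * (if i = k0 then g i j0 else 1) := by
    intro i
    by_cases h : i = i0
    · subst h; simp [fun h' => hik h']
    · by_cases h2 : i = k0 <;> simp [h, h2, Ne.symm hik]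
  rw [Finset.prod_congr rfl (fun i _ => this i), Finset.prod_mul_distrib]
  rw [Finset.prod_ite_eq' Finset.univ i0 (fun i => g i j0),
    Finset.prod_ite_eq' Finset.univ k0 (fun i => g i j0),
    if_pos (Finset.mem_univ _), if_pos (Finset.mem_univ _)]

-- Mask moments
lemma mask_sum_zero {n : ℕ} (p : Fin n → Fin n → ℝ) :
    ∑ m : Fin n → Fin n → Bool,
      (∏ i, ∏ j, (if m i j then p i j else 1 - p i j)) = 1 := by
  rw [sum_mask_curried (fun i j b => if b then p i j else 1 - p i j)]
  simp

lemma mask_sum_one {n : ℕ} (p : Fin n → Fin n → ℝ) (i0 j0 : Fin n) :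
    ∑ m : Fin n → Fin n → Bool,
      (∏ i, ∏ j, (if m i j then p i j else 1 - p i j)) * (if m i0 j0 then (1:ℝ) else 0)
      = p i0 j0 := by
  have rw1 : ∀ m : Fin n → Fin n → Bool,
      (∏ i, ∏ j, (if m i j then p i j else 1 - p i j)) * (if m i0 j0 then (1:ℝ) else 0)
      = ∏ i, ∏ j, ((if m i j then p i j else 1 - p i j)
          * (if i = i0 ∧ j = j0 then (if m i j then (1:ℝ) else 0) else 1)) := by
    intro m
    rw [Finset.prod_congr rfl (fun i _ => Finset.prod_mul_distrib), Finset.prod_mul_distrib]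
    congr 1
    exact (prod_special_one i0 j0 (fun i j => if m i j then (1:ℝ) else 0)).symm
  rw [Finset.sum_congr rfl (fun m _ => rw1 m),
    sum_mask_curried (fun i j b => (if b then p i j else 1 - p i j)
      * (if i = i0 ∧ j = j0 then (if b then (1:ℝ) else 0) else 1))]
  have ent : ∀ i j : Fin n,
      ((if false then p i j else 1 - p i j) * (if i = i0 ∧ j = j0 then (if false then (1:ℝ) else 0) else 1)
        + (if true then p i j else 1 - p i j) * (if i = i0 ∧ j = j0 then (if true then (1:ℝ) else 0) else 1))
      = if i = i0 ∧ j = j0 then p i j else 1 := by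
    intro i j
    by_cases h : i = i0 ∧ j = j0 <;> simp [h]
  rw [Finset.prod_congr rfl (fun i _ => Finset.prod_congr rfl (fun j _ => ent i j))]
  exact prod_special_one i0 j0 p

lemma mask_sum_two {n : ℕ} (p : Fin n → Fin n → ℝ) (i0 k0 j0 : Fin n) (hik : i0 ≠ k0) :
    ∑ m : Fin n → Fin n → Bool,
      (∏ i, ∏ j, (if m i j then p i j else 1 - p i j))
        * ((if m i0 j0 then (1:ℝ) else 0) * (if m k0 j0 then (1:ℝ) else 0))
      = p i0 j0 * p k0 j0 := by
  have rw1 : ∀ m : Fin n → Fin n → Bool,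
      (∏ i, ∏ j, (if m i j then p i j else 1 - p i j))
        * ((if m i0 j0 then (1:ℝ) else 0) * (if m k0 j0 then (1:ℝ) else 0))
      = ∏ i, ∏ j, ((if m i j then p i j else 1 - p i j)
          * (if (i = i0 ∧ j = j0) ∨ (i = k0 ∧ j = j0)
              then (if m i j then (1:ℝ) else 0) else 1)) := by
    intro m
    rw [Finset.prod_congr rfl (fun i _ => Finset.prod_mul_distrib), Finset.prod_mul_distrib]
    congr 1
    exact (prod_special_two i0 k0 j0 hik (fun i j => if m i j then (1:ℝ) else 0)).symm
  rw [Finset.sum_congr rfl (fun m _ => rw1 m),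
    sum_mask_curried (fun i j b => (if b then p i j else 1 - p i j)
      * (if (i = i0 ∧ j = j0) ∨ (i = k0 ∧ j = j0) then (if b then (1:ℝ) else 0) else 1))]
  have ent : ∀ i j : Fin n,
      ((if false then p i j else 1 - p i j)
          * (if (i = i0 ∧ j = j0) ∨ (i = k0 ∧ j = j0) then (if false then (1:ℝ) else 0) else 1)
        + (if true then p i j else 1 - p i j)
          * (if (i = i0 ∧ j = j0) ∨ (i = k0 ∧ j = j0) then (if true then (1:ℝ) else 0) else 1))
      = if (i = i0 ∧ j = j0) ∨ (i = k0 ∧ j = j0) then p i j else 1 := by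
    intro i j
    by_cases h : (i = i0 ∧ j = j0) ∨ (i = k0 ∧ j = j0) <;> simp [h]
  rw [Finset.prod_congr rfl (fun i _ => Finset.prod_congr rfl (fun j _ => ent i j))]
  exact prod_special_two i0 k0 j0 hik p


section Moments
variable {n : ℕ} (θ : Fin n → ℝ) (p : Fin n → Fin n → ℝ)

lemma edge_split (i j : Fin n) (ω : Equiv.Perm (Fin n) × (Fin n → Fin n → Bool)) :
    bplEdge i j ω = (if ω.1.symm i < ω.1.symm j then (1:ℝ) else 0)
      * (if ω.2 i j then (1:ℝ) else 0) := by
  unfold bplEdge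
  by_cases h1 : ω.2 i j <;> by_cases h2 : ω.1.symm i < ω.1.symm j <;>
    simp [h1, h2]

lemma edge_idem (i j : Fin n) (ω : Equiv.Perm (Fin n) × (Fin n → Fin n → Bool)) :
    bplEdge i j ω * bplEdge i j ω = bplEdge i j ω := by
  unfold bplEdge; split_ifs <;> ring

lemma bpl_sum_one :
    ∑ ω : Equiv.Perm (Fin n) × (Fin n → Fin n → Bool), bplProb θ p ω = 1 := by
  rw [Fintype.sum_prod_type]
  unfold bplProb
  simp only
  calc ∑ π : Equiv.Perm (Fin n), ∑ m : Fin n → Fin n → Bool,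
        plackettLuce θ π * ∏ i, ∏ j, (if m i j then p i j else 1 - p i j)
      = ∑ π : Equiv.Perm (Fin n), plackettLuce θ π * 1 := by
        apply Finset.sum_congr rfl
        intro π _
        rw [← Finset.mul_sum, mask_sum_zero]
    _ = 1 := by simp [pl_sum n θ]

lemma bpl_moment_one (i j : Fin n) (hij : i ≠ j) :
    ∑ ω : Equiv.Perm (Fin n) × (Fin n → Fin n → Bool),
      bplProb θ p ω * bplEdge i j ω = bplEdgeExp θ p i j := by
  rw [Fintype.sum_prod_type]
  have step : ∀ (π : Equiv.Perm (Fin n)) (m : Fin n → Fin n → Bool),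
      bplProb θ p (π, m) * bplEdge i j (π, m)
      = (plackettLuce θ π * (if π.symm i < π.symm j then (1:ℝ) else 0))
        * ((∏ a, ∏ c, (if m a c then p a c else 1 - p a c)) * (if m i j then (1:ℝ) else 0)) := by
    intro π m
    rw [edge_split]
    unfold bplProb
    simp only
    ring
  calc ∑ π, ∑ m, bplProb θ p (π, m) * bplEdge i j (π, m)
      = ∑ π : Equiv.Perm (Fin n),
          (plackettLuce θ π * (if π.symm i < π.symm j then (1:ℝ) else 0)) * p i j := by
        apply Finset.sum_congr rfl
        intro π _
        rw [Finset.sum_congr rfl (fun m _ => step π m), ← Finset.mul_sum, mask_sum_one]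
    _ = bplEdgeExp θ p i j := by
        rw [← Finset.sum_mul, pl_marg1 n θ i j hij]
        unfold bplEdgeExp
        ring

lemma bpl_moment_two (i k j : Fin n) (hij : i ≠ j) (hkj : k ≠ j) (hik : i ≠ k) :
    ∑ ω : Equiv.Perm (Fin n) × (Fin n → Fin n → Bool),
      bplProb θ p ω * (bplEdge i j ω * bplEdge k j ω)
      = bplEdgeExp θ p i j * bplEdgeExp θ p k j
          * (1 + Real.exp (θ j) / (Real.exp (θ i) + Real.exp (θ j) + Real.exp (θ k))) := by
  rw [Fintype.sum_prod_type]
  have step : ∀ (π : Equiv.Perm (Fin n)) (m : Fin n → Fin n → Bool),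
      bplProb θ p (π, m) * (bplEdge i j (π, m) * bplEdge k j (π, m))
      = (plackettLuce θ π * (if π.symm i < π.symm j then (1:ℝ) else 0)
          * (if π.symm k < π.symm j then (1:ℝ) else 0))
        * ((∏ a, ∏ c, (if m a c then p a c else 1 - p a c))
          * ((if m i j then (1:ℝ) else 0) * (if m k j then (1:ℝ) else 0))) := by
    intro π m
    rw [edge_split, edge_split]
    unfold bplProb
    simp only
    ring
  calc ∑ π, ∑ m, bplProb θ p (π, m) * (bplEdge i j (π, m) * bplEdge k j (π, m))
      = ∑ π : Equiv.Perm (Fin n),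
          (plackettLuce θ π * (if π.symm i < π.symm j then (1:ℝ) else 0)
            * (if π.symm k < π.symm j then (1:ℝ) else 0)) * (p i j * p k j) := by
        apply Finset.sum_congr rfl
        intro π _
        rw [Finset.sum_congr rfl (fun m _ => step π m), ← Finset.mul_sum,
          mask_sum_two p i k j hik]
    _ = _ := by
        rw [← Finset.sum_mul, pl_marg2 n θ i k j hij hkj hik]
        unfold bplEdgeExp
        have hA : (0:ℝ) < Real.exp (θ i) := Real.exp_pos _
        have hB : (0:ℝ) < Real.exp (θ k) := Real.exp_pos _
        have hC : (0:ℝ) < Real.exp (θ j) := Real.exp_pos _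
        set A := Real.exp (θ i)
        set B := Real.exp (θ k)
        set C := Real.exp (θ j)
        have h1 : A + B + C ≠ 0 := by positivity
        have h2 : A + C ≠ 0 := by positivity
        have h3 : B + C ≠ 0 := by positivity
        have h4 : A + C + B ≠ 0 := by positivity
        field_simp
        ring

end Moments


end BPLAux

/-- Expectation over the Bernoulli-Plackett-Luce model of the Gaussian
log-density `log N(x_j | μ_j, σ_j²)` with `μ_j = b_j + Σ_{i ≠ j} a_{ij} w_{ij} x_i`:
it equals
`−½ [ log(2πσ_j²) + (1/σ_j²)( (x_j − b_j − Σ_{i≠j} E[a_{ij}] w_{ij} x_i)²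
  + Σ_{i≠j} E[a_{ij}](1 − E[a_{ij}]) w_{ij}² x_i²
  + Σ_{i≠j} Σ_{k≠j,k≠i} (E[a_{ij}] w_{ij} x_i)(E[a_{kj}] w_{kj} x_k)
      e^{θ_j}/(e^{θ_i}+e^{θ_j}+e^{θ_k}) ) ]`. -/
theorem bpl_expected_gaussian_loglik {n : ℕ} (hn : 3 ≤ n) (θ : Fin n → ℝ)
    (p : Fin n → Fin n → ℝ) (hp : ∀ a b, 0 ≤ p a b ∧ p a b ≤ 1)
    (j : Fin n) (x : Fin n → ℝ) (w : Fin n → ℝ) (b σ : ℝ) (hσ : 0 < σ) :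
    (∑ ω : Equiv.Perm (Fin n) × (Fin n → Fin n → Bool),
        bplProb θ p ω *
          (-(1 / 2) * (Real.log (2 * Real.pi * σ ^ 2)
            + (x j - (b + ∑ i ∈ Finset.univ.erase j, bplEdge i j ω * w i * x i)) ^ 2
                / σ ^ 2)))
      = -(1 / 2) * (Real.log (2 * Real.pi * σ ^ 2)
          + (1 / σ ^ 2) *
            ((x j - b - ∑ i ∈ Finset.univ.erase j, bplEdgeExp θ p i j * w i * x i) ^ 2
              + (∑ i ∈ Finset.univ.erase j,
                  bplEdgeExp θ p i j * (1 - bplEdgeExp θ p i j) * w i ^ 2 * x i ^ 2)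
              + ∑ i ∈ Finset.univ.erase j, ∑ k ∈ (Finset.univ.erase j).erase i,
                  (bplEdgeExp θ p i j * w i * x i) * (bplEdgeExp θ p k j * w k * x k)
                    * (Real.exp (θ j)
                        / (Real.exp (θ i) + Real.exp (θ j) + Real.exp (θ k))))) := by
  classical
  set s : Finset (Fin n) := Finset.univ.erase j with hs
  set C : ℝ := x j - b with hC
  set c : Fin n → ℝ := fun i => w i * x i with hc
  set E : Fin n → ℝ := fun i => bplEdgeExp θ p i j with hE
  set r : Fin n → Fin n → ℝ := fun i k =>
    Real.exp (θ j) / (Real.exp (θ i) + Real.exp (θ j) + Real.exp (θ k)) with hr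
  have hmem : ∀ i ∈ s, i ≠ j := fun i hi => Finset.ne_of_mem_erase hi
  set L : ℝ := Real.log (2 * Real.pi * σ ^ 2) with hL
  -- pointwise expansion of the squared term
  have expand : ∀ ω : Equiv.Perm (Fin n) × (Fin n → Fin n → Bool),
      bplProb θ p ω * (x j - (b + ∑ i ∈ s, bplEdge i j ω * w i * x i)) ^ 2
      = bplProb θ p ω * C ^ 2
        + (∑ i ∈ s, (bplProb θ p ω * bplEdge i j ω) * (-2 * C * c i))
        + (∑ i ∈ s, (bplProb θ p ω * bplEdge i j ω) * (c i) ^ 2)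
        + (∑ i ∈ s, ∑ k ∈ s.erase i,
            (bplProb θ p ω * (bplEdge i j ω * bplEdge k j ω)) * (c i * c k)) := by
    intro ω
    set P := bplProb θ p ω with hP
    set S := ∑ i ∈ s, bplEdge i j ω * w i * x i with hS
    have hS2 : S * S
        = (∑ i ∈ s, bplEdge i j ω * (c i) ^ 2)
          + ∑ i ∈ s, ∑ k ∈ s.erase i,
              (bplEdge i j ω * bplEdge k j ω) * (c i * c k) := by
      rw [hS, Finset.sum_mul_sum, ← Finset.sum_add_distrib]
      apply Finset.sum_congr rfl
      intro i hi
      rw [← Finset.add_sum_erase _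
        (fun k => (bplEdge i j ω * w i * x i) * (bplEdge k j ω * w k * x k)) hi]
      congr 1
      · have h2 : (bplEdge i j ω * w i * x i) * (bplEdge i j ω * w i * x i)
            = (bplEdge i j ω * bplEdge i j ω) * (c i) ^ 2 := by rw [hc]; ring
        rw [h2, edge_idem]
      · apply Finset.sum_congr rfl
        intro k _
        rw [hc]; ring
    have key : (x j - (b + S)) ^ 2 = C ^ 2 + (-2 * C) * S + S * S := by
      rw [hC]; ring
    have h1 : P * ((-2 * C) * S) = ∑ i ∈ s, (P * bplEdge i j ω) * (-2 * C * c i) := by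
      rw [hS, Finset.mul_sum, Finset.mul_sum]
      apply Finset.sum_congr rfl
      intro i _
      rw [hc]; ring
    have h2 : P * (∑ i ∈ s, bplEdge i j ω * (c i) ^ 2)
        = ∑ i ∈ s, (P * bplEdge i j ω) * (c i) ^ 2 := by
      rw [Finset.mul_sum]
      apply Finset.sum_congr rfl
      intro i _
      ring
    have h3 : P * (∑ i ∈ s, ∑ k ∈ s.erase i, (bplEdge i j ω * bplEdge k j ω) * (c i * c k))
        = ∑ i ∈ s, ∑ k ∈ s.erase i, (P * (bplEdge i j ω * bplEdge k j ω)) * (c i * c k) := by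
      rw [Finset.mul_sum]
      apply Finset.sum_congr rfl
      intro i _
      rw [Finset.mul_sum]
      apply Finset.sum_congr rfl
      intro k _
      ring
    calc P * (x j - (b + S)) ^ 2
        = P * C ^ 2 + P * ((-2 * C) * S) + P * ((∑ i ∈ s, bplEdge i j ω * (c i) ^ 2)
            + ∑ i ∈ s, ∑ k ∈ s.erase i, (bplEdge i j ω * bplEdge k j ω) * (c i * c k)) := by
          rw [key, ← hS2]; ring
      _ = _ := by rw [mul_add, h1, h2, h3]; ring
  -- total expectation of the quadratic term
  have EQ : ∑ ω : Equiv.Perm (Fin n) × (Fin n → Fin n → Bool),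
      bplProb θ p ω * (x j - (b + ∑ i ∈ s, bplEdge i j ω * w i * x i)) ^ 2
      = C ^ 2 + (∑ i ∈ s, E i * (-2 * C * c i)) + (∑ i ∈ s, E i * (c i) ^ 2)
        + ∑ i ∈ s, ∑ k ∈ s.erase i, (E i * E k * (1 + r i k)) * (c i * c k) := by
    rw [Finset.sum_congr rfl (fun ω _ => expand ω), Finset.sum_add_distrib,
      Finset.sum_add_distrib, Finset.sum_add_distrib]
    congr 1
    · congr 1
      · congr 1
        · rw [← Finset.sum_mul, bpl_sum_one, one_mul]
        · rw [Finset.sum_comm]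
          apply Finset.sum_congr rfl
          intro i hi
          rw [← Finset.sum_mul, bpl_moment_one θ p i j (hmem i hi)]
      · rw [Finset.sum_comm]
        apply Finset.sum_congr rfl
        intro i hi
        rw [← Finset.sum_mul, bpl_moment_one θ p i j (hmem i hi)]
    · rw [Finset.sum_comm]
      apply Finset.sum_congr rfl
      intro i hi
      rw [Finset.sum_comm]
      apply Finset.sum_congr rfl
      intro k hk
      rw [← Finset.sum_mul, bpl_moment_two θ p i k j (hmem i hi)
        (hmem k (Finset.mem_of_mem_erase hk)) (Ne.symm (Finset.ne_of_mem_erase hk))]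
  -- algebraic identity between the two quadratic forms
  have ident : C ^ 2 + (∑ i ∈ s, E i * (-2 * C * c i)) + (∑ i ∈ s, E i * (c i) ^ 2)
        + (∑ i ∈ s, ∑ k ∈ s.erase i, (E i * E k * (1 + r i k)) * (c i * c k))
      = (C - ∑ i ∈ s, E i * w i * x i) ^ 2
        + (∑ i ∈ s, E i * (1 - E i) * w i ^ 2 * x i ^ 2)
        + ∑ i ∈ s, ∑ k ∈ s.erase i,
            (E i * w i * x i) * (E k * w k * x k) * r i k := by
    set D : ℝ := ∑ i ∈ s, E i * w i * x i with hD
    have hDD : D * D = (∑ i ∈ s, (E i * w i * x i) ^ 2)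
        + ∑ i ∈ s, ∑ k ∈ s.erase i, (E i * w i * x i) * (E k * w k * x k) := by
      rw [hD, Finset.sum_mul_sum, ← Finset.sum_add_distrib]
      apply Finset.sum_congr rfl
      intro i hi
      rw [← Finset.add_sum_erase _
        (fun k => (E i * w i * x i) * (E k * w k * x k)) hi]
      congr 1
      ring
    have hA : ∑ i ∈ s, E i * (-2 * C * c i) = (-2 * C) * D := by
      rw [hD, Finset.mul_sum]
      apply Finset.sum_congr rfl
      intro i _
      rw [hc]; ring
    have hB : ∑ i ∈ s, E i * (c i) ^ 2
        = (∑ i ∈ s, E i * (1 - E i) * w i ^ 2 * x i ^ 2)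
          + ∑ i ∈ s, (E i * w i * x i) ^ 2 := by
      rw [← Finset.sum_add_distrib]
      apply Finset.sum_congr rfl
      intro i _
      rw [hc]; ring
    have hCC : ∑ i ∈ s, ∑ k ∈ s.erase i, (E i * E k * (1 + r i k)) * (c i * c k)
        = (∑ i ∈ s, ∑ k ∈ s.erase i, (E i * w i * x i) * (E k * w k * x k))
          + ∑ i ∈ s, ∑ k ∈ s.erase i,
              (E i * w i * x i) * (E k * w k * x k) * r i k := by
      rw [← Finset.sum_add_distrib]
      apply Finset.sum_congr rfl
      intro i _
      rw [← Finset.sum_add_distrib]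
      apply Finset.sum_congr rfl
      intro k _
      rw [hc]; ring
    have hsq : (C - D) ^ 2 = C ^ 2 + (-2 * C) * D + D * D := by ring
    rw [hA, hB, hCC, hsq, hDD]
    ring
  -- final assembly
  have point : ∀ ω : Equiv.Perm (Fin n) × (Fin n → Fin n → Bool),
      bplProb θ p ω *
        (-(1 / 2) * (L
          + (x j - (b + ∑ i ∈ s, bplEdge i j ω * w i * x i)) ^ 2 / σ ^ 2))
      = bplProb θ p ω * (-(1 / 2) * L)
        + (bplProb θ p ω * (x j - (b + ∑ i ∈ s, bplEdge i j ω * w i * x i)) ^ 2)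
            * (-(1 / 2) / σ ^ 2) := by
    intro ω
    ring
  rw [Finset.sum_congr rfl (fun ω _ => point ω), Finset.sum_add_distrib,
    ← Finset.sum_mul, ← Finset.sum_mul, bpl_sum_one, EQ, ident, one_mul]
  ring
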